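/- Let P be a directed family of sequences p with p_i ≥ 1, and let A(P) be the Köthe algebra λ(P) with multiplication e_i e_j = e_{min(i,j)}. If every sequence p ∈ P has a bounded subsequence, then A(P) has a (right) locally bounded approximate identity. -/
import Mathlib


/-- The Köthe sequence space `λ(P)` as a subspace of `ℕ → ℂ`. -/
noncomputable def kothe (P : Set (ℕ → ℝ)) (hP : ∀ p ∈ P, ∀ i, (1 : ℝ) ≤ p i) :
    Submodule ℂ (ℕ → ℂ) where
  carrier := {a | ∀ p ∈ P, Summable fun i => ‖a i‖ * p i}
  zero_mem' := by intro p hp; simpa using summable_zero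
  add_mem' := by
    intro a b ha hb p hp
    refine Summable.of_nonneg_of_le
      (fun i => mul_nonneg (norm_nonneg _)
        (le_trans zero_le_one (hP p hp i))) (fun i => ?_) ((ha p hp).add (hb p hp))
    have := mul_le_mul_of_nonneg_right (norm_add_le ((a : ℕ → ℂ) i) (b i))
      (le_trans zero_le_one (hP p hp i))
    simpa [add_mul] using this
  smul_mem' := by
    intro c a ha p hp
    have := (ha p hp).mul_left ‖c‖
    refine this.congr fun i => ?_
    simp [norm_smul, mul_assoc]

/-- The `i`-th standard unit vector as an element of `λ(P)`. -/
noncomputable def kotheE (P : Set (ℕ → ℝ)) (hP : ∀ p ∈ P, ∀ i, (1 : ℝ) ≤ p i)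
    (i : ℕ) : kothe P hP :=
  ⟨Pi.single i 1, by
    intro p hp
    refine summable_of_ne_finset_zero (s := {i}) fun j hj => ?_
    rw [Pi.single_eq_of_ne (by simpa using hj)]
    simp⟩

/-- The seminorm `‖a‖_p = ∑ᵢ |aᵢ| pᵢ` (as a real-valued expression). -/
noncomputable def kNorm (p : ℕ → ℝ) (a : ℕ → ℂ) : ℝ := ∑' i, ‖a i‖ * p i

open Filter

/-- If every `p ∈ P` has a bounded subsequence, then the Köthe algebra `A(P)` has a
(right) locally bounded approximate identity. -/
lemma kNorm_nonneg {p : ℕ → ℝ} (hp : ∀ i, (0:ℝ) ≤ p i) (a : ℕ → ℂ) :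
    0 ≤ kNorm p a :=
  tsum_nonneg fun i => mul_nonneg (norm_nonneg _) (hp i)

lemma kNorm_sub_le {p : ℕ → ℝ} (hp0 : ∀ i, (0:ℝ) ≤ p i) (a b : ℕ → ℂ)
    (ha : Summable fun i => ‖a i‖ * p i) (hb : Summable fun i => ‖b i‖ * p i) :
    kNorm p (a - b) ≤ kNorm p a + kNorm p b := by
  have h1 : ∀ i, ‖(a - b) i‖ * p i ≤ ‖a i‖ * p i + ‖b i‖ * p i := by
    intro i
    have := mul_le_mul_of_nonneg_right (norm_sub_le (a i) (b i)) (hp0 i)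
    simpa [add_mul] using this
  have hsum : Summable fun i => ‖(a - b) i‖ * p i :=
    Summable.of_nonneg_of_le (fun i => mul_nonneg (norm_nonneg _) (hp0 i)) h1 (ha.add hb)
  calc kNorm p (a - b) ≤ ∑' i, (‖a i‖ * p i + ‖b i‖ * p i) :=
        Summable.tsum_le_tsum h1 hsum (ha.add hb)
    _ = kNorm p a + kNorm p b := Summable.tsum_add ha hb

lemma kNorm_E (P : Set (ℕ → ℝ)) (hP : ∀ p ∈ P, ∀ i, (1 : ℝ) ≤ p i) (p : ℕ → ℝ) (n : ℕ) :
    kNorm p ((kotheE P hP n : kothe P hP) : ℕ → ℂ) = p n := by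
  have : kNorm p (Pi.single n 1) = p n := by
    unfold kNorm
    rw [tsum_eq_single n]
    · simp
    · intro j hj; rw [Pi.single_eq_of_ne hj]; simp
  exact this

lemma trunc_coe (P : Set (ℕ → ℝ)) (hP : ∀ p ∈ P, ∀ i, (1 : ℝ) ≤ p i)
    (a : kothe P hP) (N j : ℕ) :
    ((∑ i ∈ Finset.range N, (a : ℕ → ℂ) i • kotheE P hP i : kothe P hP) : ℕ → ℂ) j
      = if j < N then (a : ℕ → ℂ) j else 0 := by
  rw [AddSubmonoidClass.coe_finset_sum]
  simp only [Finset.sum_apply, SetLike.val_smul, Pi.smul_apply, kotheE, Pi.single_apply,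
    smul_eq_mul, mul_ite, mul_one, mul_zero]
  simp [Finset.sum_ite_eq, Finset.mem_range, eq_comm]

lemma tail_eq (f : ℕ → ℝ) (hf : Summable f) (N : ℕ) :
    ∑' i, (if i < N then 0 else f i) = ∑' i, f (i + N) := by
  have hh : Summable fun i => if i < N then f i else 0 :=
    summable_of_ne_finset_zero (s := Finset.range N)
      (fun j hj => by simp [Finset.mem_range] at hj; simp [hj])
  have hfe : ∀ i, f i = (if i < N then f i else 0) + (if i < N then 0 else f i) := by
    intro i; split_ifs <;> simp
  have hg : Summable fun i => if i < N then 0 else f i := by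
    have := hf.sub hh
    refine this.congr fun i => ?_
    have h := hfe i
    show f i - _ = _
    linarith
  have h1 : ∑' i, f i = (∑' i, if i < N then f i else 0) + ∑' i, (if i < N then 0 else f i) := by
    rw [← Summable.tsum_add hh hg]; exact tsum_congr hfe
  have h2 : (∑' i, if i < N then f i else 0) = ∑ i ∈ Finset.range N, f i := by
    rw [tsum_eq_sum (s := Finset.range N)]
    · exact Finset.sum_congr rfl fun i hi => by simp [Finset.mem_range.mp hi]
    · intro j hj; simp [Finset.mem_range] at hj; simp [hj]
  have h3 := Summable.sum_add_tsum_nat_add N hf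
  linarith [h1, h2, h3]

theorem stmt12 (P : Set (ℕ → ℝ)) (hP : ∀ p ∈ P, ∀ i, (1 : ℝ) ≤ p i)
    (hdir : ∀ p ∈ P, ∀ q ∈ P, ∃ r ∈ P, ∀ i, max (p i) (q i) ≤ r i)
    (M : kothe P hP →ₗ[ℂ] kothe P hP →ₗ[ℂ] kothe P hP)
    (hMe : ∀ i j : ℕ, M (kotheE P hP i) (kotheE P hP j) = kotheE P hP (min i j))
    (hMsub : ∀ p ∈ P, ∀ a b : kothe P hP,
      kNorm p (M a b : ℕ → ℂ) ≤ kNorm p (a : ℕ → ℂ) * kNorm p (b : ℕ → ℂ))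
    (hbdd : ∀ p ∈ P, ∃ s : ℕ → ℕ, StrictMono s ∧ ∃ C : ℝ, ∀ m, p (s m) ≤ C) :
    ∃ C : (ℕ → ℝ) → ℝ, (∀ p ∈ P, 0 < C p) ∧
      ∀ (F : Finset (kothe P hP)), ∀ p ∈ P, ∀ ε : ℝ, 0 < ε →
        ∃ b : kothe P hP,
          (∀ a ∈ F, kNorm p ((a - M a b : kothe P hP) : ℕ → ℂ) < ε) ∧
          kNorm p (b : ℕ → ℂ) ≤ C p := by
  choose! s hs C hC using hbdd
  have hCpos : ∀ p ∈ P, 0 < C p := fun p hp =>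
    lt_of_lt_of_le (lt_of_lt_of_le one_pos (hP p hp (s p 0))) (hC p hp 0)
  refine ⟨C, hCpos, ?_⟩
  intro F p hp ε hε
  set Cp := C p with hCp
  have hp0 : ∀ i, (0:ℝ) ≤ p i := fun i => le_trans zero_le_one (hP p hp i)
  have hCp1 : (1:ℝ) ≤ Cp := le_trans (hP p hp (s p 0)) (hC p hp 0)
  have h1Cp : (0:ℝ) < 1 + Cp := by linarith
  set δ := ε / (1 + Cp) with hδdef
  have hδ : 0 < δ := div_pos hε h1Cp
  -- choose N such that the tails of all a ∈ F are < δ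
  have htail : ∀ᶠ N in atTop, ∀ a ∈ F,
      (∑' i, ‖(a : ℕ → ℂ) (i + N)‖ * p (i + N)) < δ := by
    rw [eventually_all_finset]
    intro a _
    have h0 := tendsto_sum_nat_add (fun i => ‖(a : ℕ → ℂ) i‖ * p i)
    exact h0.eventually_lt_const hδ
  obtain ⟨N, hN⟩ := htail.exists
  set n := s p N with hn
  have hnN : N ≤ n := (hs p hp).le_apply
  set b := kotheE P hP n with hb
  have hbnorm : kNorm p ((b : kothe P hP) : ℕ → ℂ) = p n := kNorm_E P hP p n
  refine ⟨b, ?_, by rw [hbnorm]; exact hC p hp N⟩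
  intro a haF
  set T : kothe P hP := ∑ i ∈ Finset.range N, (a : ℕ → ℂ) i • kotheE P hP i with hT
  -- M T b = T
  have hMT : M T b = T := by
    have h1 : M T b = ∑ i ∈ Finset.range N, (a : ℕ → ℂ) i • M (kotheE P hP i) b := by
      rw [hT, map_sum, LinearMap.coe_sum, Finset.sum_apply]
      exact Finset.sum_congr rfl fun i _ => by rw [map_smul, LinearMap.smul_apply]
    rw [h1, hT]
    refine Finset.sum_congr rfl fun i hi => ?_
    rw [hb, hMe i n, min_eq_left (le_trans (Finset.mem_range.mp hi).le hnN)]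
  -- decomposition
  have hkey : (a - M a b : kothe P hP) = (a - T) - M (a - T) b := by
    rw [map_sub, LinearMap.sub_apply, hMT]; abel
  -- summability facts
  have hsum : ∀ x : kothe P hP, Summable fun i => ‖(x : ℕ → ℂ) i‖ * p i := fun x => x.2 p hp
  -- tail bound
  have hcoord : ∀ j, ((a - T : kothe P hP) : ℕ → ℂ) j = if j < N then 0 else (a : ℕ → ℂ) j := by
    intro j
    rw [Submodule.coe_sub, Pi.sub_apply, hT, trunc_coe P hP a N j]
    split_ifs <;> simp
  have htailval : kNorm p ((a - T : kothe P hP) : ℕ → ℂ)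
      = ∑' i, ‖(a : ℕ → ℂ) (i + N)‖ * p (i + N) := by
    have he : ∀ j, ‖((a - T : kothe P hP) : ℕ → ℂ) j‖ * p j
        = if j < N then 0 else ‖(a : ℕ → ℂ) j‖ * p j := by
      intro j; rw [hcoord j]; split_ifs <;> simp
    rw [kNorm, tsum_congr he, tail_eq _ (hsum a) N]
  have htb : kNorm p ((a - T : kothe P hP) : ℕ → ℂ) < δ := by
    rw [htailval]; exact hN a haF
  have htb0 : 0 ≤ kNorm p ((a - T : kothe P hP) : ℕ → ℂ) := kNorm_nonneg hp0 _
  -- final estimate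
  have hest : kNorm p ((a - M a b : kothe P hP) : ℕ → ℂ)
      ≤ kNorm p ((a - T : kothe P hP) : ℕ → ℂ) * (1 + Cp) := by
    rw [hkey]
    have h2 : kNorm p (((a - T) - M (a - T) b : kothe P hP) : ℕ → ℂ)
        ≤ kNorm p ((a - T : kothe P hP) : ℕ → ℂ)
          + kNorm p ((M (a - T) b : kothe P hP) : ℕ → ℂ) := by
      rw [Submodule.coe_sub]
      exact kNorm_sub_le hp0 _ _ (hsum _) (hsum _)
    have h3 : kNorm p ((M (a - T) b : kothe P hP) : ℕ → ℂ)
        ≤ kNorm p ((a - T : kothe P hP) : ℕ → ℂ) * Cp := by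
      refine le_trans (hMsub p hp (a - T) b) ?_
      rw [hbnorm]
      exact mul_le_mul_of_nonneg_left (hC p hp N) htb0
    nlinarith
  have : kNorm p ((a - T : kothe P hP) : ℕ → ℂ) * (1 + Cp) < δ * (1 + Cp) :=
    mul_lt_mul_of_pos_right htb h1Cp
  have hδε : δ * (1 + Cp) = ε := div_mul_cancel₀ ε (ne_of_gt h1Cp)
  linarith
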